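/- Let π be a finitely generated group and φ: π → π an endomorphism. If GR(φ) < 1, then GR(φ) = 0 and φ is eventually trivial; conversely, if φ is eventually trivial, then GR(φ) = 0. -/
import Mathlib


open Filter Topology

/-- Word length of `g` with respect to the (symmetrized) generating set `S`. -/
noncomputable def wordLength {G : Type*} [Group G] (S : Set G) (g : G) : ℕ :=
  sInf {n : ℕ | ∃ w : List G, w.length = n ∧ (∀ x ∈ w, x ∈ S ∨ x⁻¹ ∈ S) ∧ w.prod = g}

/-- `L_k(f, S) = max_{s ∈ S} L(f^k(s), S)`. -/
noncomputable def Lk {G : Type*} [Group G] (S : Finset G) (f : G → G) (k : ℕ) : ℕ :=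
  S.sup fun s => wordLength (S : Set G) (f^[k] s)

/-- The growth rate `GR(f) = inf_{k ≥ 1} L_k(f,S)^{1/k}` (which equals
`lim_{k→∞} L_k(f,S)^{1/k}`). -/
noncomputable def GR {G : Type*} [Group G] (S : Finset G) (f : G → G) : ℝ :=
  ⨅ k : ℕ+, (Lk S f k : ℝ) ^ (((k : ℕ) : ℝ))⁻¹

/-- `f` is eventually trivial if some iterate is the trivial endomorphism. -/
def EventuallyTrivial {G : Type*} [Group G] (f : G → G) : Prop :=
  ∃ N : ℕ, 0 < N ∧ ∀ g, f^[N] g = 1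

lemma wordLength_one {G : Type*} [Group G] (S : Set G) : wordLength S 1 = 0 := by
  apply Nat.sInf_eq_zero.mpr
  left
  exact ⟨[], rfl, by simp, by simp⟩

lemma exists_word {G : Type*} [Group G] (S : Set G) (g : G)
    (hg : g ∈ Subgroup.closure S) :
    ∃ l : List G, (∀ x ∈ l, x ∈ S ∨ x⁻¹ ∈ S) ∧ l.prod = g := by
  induction hg using Subgroup.closure_induction with
  | mem x hx => exact ⟨[x], by simp [hx], by simp⟩
  | one => exact ⟨[], by simp, by simp⟩
  | mul x y _ _ hx hy =>
      obtain ⟨l1, h1, p1⟩ := hx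
      obtain ⟨l2, h2, p2⟩ := hy
      exact ⟨l1 ++ l2, by
        intro a ha
        rcases List.mem_append.mp ha with h | h
        · exact h1 a h
        · exact h2 a h, by rw [List.prod_append, p1, p2]⟩
  | inv x _ hx =>
      obtain ⟨l, h1, p1⟩ := hx
      refine ⟨(l.map fun a => a⁻¹).reverse, ?_, ?_⟩
      · intro a ha
        simp only [List.mem_reverse, List.mem_map] at ha
        obtain ⟨b, hb, rfl⟩ := ha
        rcases h1 b hb with h | h
        · exact Or.inr (by simpa using h)
        · exact Or.inl h
      · rw [← List.prod_inv_reverse, p1]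

lemma eq_one_of_wordLength_eq_zero {G : Type*} [Group G] (S : Set G) (g : G)
    (hg : g ∈ Subgroup.closure S) (h : wordLength S g = 0) : g = 1 := by
  have hex := exists_word S g hg
  obtain ⟨l, hl1, hl2⟩ := hex
  have hne : {n : ℕ | ∃ w : List G, w.length = n ∧ (∀ x ∈ w, x ∈ S ∨ x⁻¹ ∈ S) ∧
      w.prod = g}.Nonempty := ⟨l.length, l, rfl, hl1, hl2⟩
  rcases Nat.sInf_eq_zero.mp h with h0 | h0
  · obtain ⟨w, hw, _, hp⟩ := h0
    rw [List.length_eq_zero_iff.mp hw] at hp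
    simpa using hp.symm
  · exact absurd h0 hne.ne_empty

/-- If `GR(φ) < 1` then `GR(φ) = 0` and `φ` is eventually trivial;
conversely, if `φ` is eventually trivial then `GR(φ) = 0`. -/
theorem GR_lt_one_iff_eventuallyTrivial {π : Type*} [Group π] (S : Finset π)
    (hS : Subgroup.closure (S : Set π) = ⊤) (φ : π →* π) :
    (GR S ⇑φ < 1 → GR S ⇑φ = 0 ∧ EventuallyTrivial ⇑φ) ∧
    (EventuallyTrivial ⇑φ → GR S ⇑φ = 0) := by
  have hnonneg : ∀ k : ℕ+, (0 : ℝ) ≤ (Lk S ⇑φ k : ℝ) ^ (((k : ℕ) : ℝ))⁻¹ :=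
    fun k => Real.rpow_nonneg (Nat.cast_nonneg _) _
  have hbdd : BddBelow (Set.range fun k : ℕ+ => (Lk S ⇑φ k : ℝ) ^ (((k : ℕ) : ℝ))⁻¹) :=
    ⟨0, by rintro x ⟨k, rfl⟩; exact hnonneg k⟩
  have hGRnonneg : 0 ≤ GR S ⇑φ := le_ciInf hnonneg
  -- if some Lk vanishes (k ≥ 1), then φ is eventually trivial
  have key : ∀ k : ℕ+, Lk S ⇑φ (k : ℕ) = 0 → EventuallyTrivial ⇑φ := by
    intro k hk
    refine ⟨(k : ℕ), k.pos, ?_⟩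
    intro g
    have hgen : ∀ s ∈ S, φ^[(k : ℕ)] s = 1 := by
      intro s hs
      have h0 : wordLength (S : Set π) (φ^[(k : ℕ)] s) = 0 :=
        Nat.le_zero.mp (hk ▸ Finset.le_sup (f := fun s => wordLength (S : Set π)
          (φ^[(k : ℕ)] s)) hs)
      exact eq_one_of_wordLength_eq_zero _ _ (hS ▸ Subgroup.mem_top _) h0
    have hg : g ∈ Subgroup.closure (S : Set π) := hS ▸ Subgroup.mem_top g
    induction hg using Subgroup.closure_induction with
    | mem x hx => exact hgen x hx
    | one => simp
    | mul x y _ _ hx hy => rw [iterate_map_mul, hx, hy, one_mul]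
    | inv x _ hx => rw [iterate_map_inv, hx, inv_one]
  have conv : EventuallyTrivial ⇑φ → GR S ⇑φ = 0 := by
    rintro ⟨N, hN, h1⟩
    have hLk : Lk S ⇑φ N = 0 := by
      apply Nat.le_zero.mp
      apply Finset.sup_le
      intro s _
      rw [h1 s, wordLength_one]
    have hle : GR S ⇑φ ≤ 0 := by
      have := ciInf_le hbdd (⟨N, hN⟩ : ℕ+)
      simp only [PNat.mk_ofNat, PNat.mk_coe] at this
      calc GR S ⇑φ ≤ (Lk S ⇑φ N : ℝ) ^ ((N : ℝ))⁻¹ := this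
        _ = 0 := by
            rw [hLk]
            push_cast
            exact Real.zero_rpow (by positivity)
    linarith
  refine ⟨?_, conv⟩
  intro hlt
  have : ∃ k : ℕ+, (Lk S ⇑φ (k : ℕ) : ℝ) ^ (((k : ℕ) : ℝ))⁻¹ < 1 := by
    by_contra h
    push_neg at h
    exact absurd (le_ciInf h) (not_le.mpr hlt)
  obtain ⟨k, hk⟩ := this
  have hk0 : Lk S ⇑φ (k : ℕ) = 0 := by
    by_contra h0
    have h1 : (1 : ℝ) ≤ (Lk S ⇑φ (k : ℕ) : ℝ) := by
      exact_mod_cast Nat.one_le_iff_ne_zero.mpr h0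
    have : (1 : ℝ) ≤ (Lk S ⇑φ (k : ℕ) : ℝ) ^ (((k : ℕ) : ℝ))⁻¹ := by
      calc (1 : ℝ) = (1 : ℝ) ^ (((k : ℕ) : ℝ))⁻¹ := (Real.one_rpow _).symm
        _ ≤ _ := Real.rpow_le_rpow zero_le_one h1 (by positivity)
    linarith
  have hev := key k hk0
  exact ⟨conv hev, hev⟩
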